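/- arXiv:2404.09057 — 6 statements merged into one kernel-verified Lean document; each statement's English description precedes it below -/
import Mathlib

section
/- For every n ≥ 1, the anti-diagonal sum of the Delannoy array equals the n-th Pell number: Σ_{j=0}^{n-1} d(n-1-j, j) = P(n), where the Pell numbers satisfy P(1) = 1, P(2) = 2, and P(n) = 2·P(n-1) + P(n-2) for n > 2. -/
/-- The Delannoy numbers. -/
def delannoy : ℕ → ℕ → ℕ
  | 0, _ => 1
  | _ + 1, 0 => 1
  | p + 1, q + 1 => delannoy p (q + 1) + delannoy (p + 1) q + delannoy p q

/-- The Pell numbers: `P 0 = 0`, `P 1 = 1`, `P (n+2) = 2·P (n+1) + P n`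
(so `P 2 = 2` and `P n = 2·P (n-1) + P (n-2)` for `n > 2`). -/
def pell : ℕ → ℕ
  | 0 => 0
  | 1 => 1
  | n + 2 => 2 * pell (n + 1) + pell n

lemma delannoy_zero_right (p : ℕ) : delannoy p 0 = 1 := by cases p <;> simp [delannoy]

lemma delannoy_zero_left (q : ℕ) : delannoy 0 q = 1 := by simp [delannoy]

lemma delannoy_succ_succ (p q : ℕ) :
    delannoy (p + 1) (q + 1) = delannoy p (q + 1) + delannoy (p + 1) q + delannoy p q := by simp [delannoy]

lemma S_rec (n : ℕ) :
    ∑ j ∈ Finset.range (n + 2), delannoy (n + 2 - 1 - j) j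
      = 2 * (∑ j ∈ Finset.range (n + 1), delannoy (n + 1 - 1 - j) j)
        + ∑ j ∈ Finset.range n, delannoy (n - 1 - j) j := by
  have h1 : ∑ j ∈ Finset.range (n + 1), delannoy (n + 1 - 1 - j) j
      = (∑ j ∈ Finset.range n, delannoy (n - 1 - j) (j + 1)) + 1 := by
    rw [Finset.sum_range_succ']
    congr 1
    · exact Finset.sum_congr rfl fun j _ => by congr 1; omega
    · simpa using delannoy_zero_right n
  have h2 : ∑ j ∈ Finset.range (n + 1), delannoy (n + 1 - 1 - j) j
      = (∑ j ∈ Finset.range n, delannoy (n - j) j) + 1 := by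
    rw [Finset.sum_range_succ]
    have e : n + 1 - 1 - n = 0 := by omega
    rw [e, delannoy_zero_left]
    congr 1
  have key : ∑ j ∈ Finset.range (n + 2), delannoy (n + 2 - 1 - j) j
      = (∑ j ∈ Finset.range n,
          (delannoy (n - 1 - j) (j + 1) + delannoy (n - j) j + delannoy (n - 1 - j) j)) + 2 := by
    rw [Finset.sum_range_succ, Finset.sum_range_succ']
    have e1 : delannoy (n + 2 - 1 - (n + 1)) (n + 1) = 1 := by
      have : n + 2 - 1 - (n + 1) = 0 := by omega
      rw [this, delannoy_zero_left]
    have e2 : delannoy (n + 2 - 1 - 0) 0 = 1 := delannoy_zero_right _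
    rw [e1, e2]
    have : ∀ j ∈ Finset.range n, delannoy (n + 2 - 1 - (j + 1)) (j + 1)
        = delannoy (n - 1 - j) (j + 1) + delannoy (n - j) j + delannoy (n - 1 - j) j := by
      intro j hj
      simp only [Finset.mem_range] at hj
      have hn : n + 2 - 1 - (j + 1) = (n - 1 - j) + 1 := by omega
      have hn2 : n - 1 - j + 1 = n - j := by omega
      rw [hn, delannoy_succ_succ, hn2]
    rw [Finset.sum_congr rfl this]
  rw [key, Finset.sum_add_distrib, Finset.sum_add_distrib]
  omega

/-- For `n ≥ 1`, the `n`-th anti-diagonal sum of the Delannoy array is the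
`n`-th Pell number. -/
theorem antidiagonal_sum_delannoy_eq_pell (n : ℕ) (hn : 1 ≤ n) :
    ∑ j ∈ Finset.range n, delannoy (n - 1 - j) j = pell n := by
  clear hn
  induction n using Nat.twoStepInduction with
  | zero => simp [pell]
  | one => simp [pell, delannoy_zero_right]
  | more n ih1 ih2 => rw [S_rec, ih1, ih2]; rfl
end

section
/- Let t be the integer array with t(i,1) = 1, t(1,j) = g(j) (where g(1) = 1, g(2) = -2, g(3) = 2, g(4) = -10, and g(j) = -g(j-1) + 3g(j-2) - g(j-3) for j ≥ 5), and t(i,j) = t(i-1,j-1) + t(i-1,j) + t(i,j-1) for i,j ≥ 2. For every fixed n ≥ 1, let T_n(y) = Σ_{j≥1} t(n,j) y^{j-1} as a formal power series over ℚ. Then the following identity of formal power series holds: (1-y)^n · (1+2y-y²) · T_n(y) = (1+y)^n · (1-2y-y²). -/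
open PowerSeries

/-- First-row sequence: `g 1 = 1`, `g 2 = -2`, `g 3 = 2`, `g 4 = -10`, and
`g j = -g (j-1) + 3·g (j-2) - g (j-3)` for `j ≥ 5`. (`g 0` is a junk value.) -/
def gseq : ℕ → ℤ
  | 0 => 0
  | 1 => 1
  | 2 => -2
  | 3 => 2
  | 4 => -10
  | j + 5 => -gseq (j + 4) + 3 * gseq (j + 3) - gseq (j + 2)

/-- The square array `t`: `t i 1 = 1` for `i ≥ 1`, `t 1 j = gseq j`, and
`t i j = t (i-1) (j-1) + t (i-1) j + t i (j-1)` for `i, j ≥ 2`.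
(Values with a zero index are junk.) -/
def tarr : ℕ → ℕ → ℤ
  | _, 0 => 0
  | _, 1 => 1
  | 0, _ => 0
  | 1, j => gseq j
  | i + 2, j + 2 => tarr (i + 1) (j + 1) + tarr (i + 1) (j + 2) + tarr (i + 2) (j + 1)


-- step lemma
lemma step (n : ℕ) (hn : 1 ≤ n) :
    (1 - X) * PowerSeries.mk (fun j => (tarr (n+1) (j + 1) : ℚ)) =
    (1 + X) * PowerSeries.mk (fun j => (tarr n (j + 1) : ℚ)) := by
  obtain ⟨m, rfl⟩ := Nat.exists_eq_add_of_le hn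
  ext k
  simp only [sub_mul, add_mul, one_mul, map_sub, map_add]
  cases k with
  | zero =>
    simp [coeff_zero_X_mul, tarr]
  | succ k =>
    simp only [coeff_succ_X_mul, coeff_mk]
    have : tarr (1 + m + 1) (k + 1 + 1) =
        tarr (1 + m) (k + 1) + tarr (1 + m) (k + 2) + tarr (1 + m + 1) (k + 1) := by
      rw [show 1 + m + 1 = m + 2 from by ring, show 1 + m = m + 1 from by ring]
      simp [tarr]
    push_cast [this]
    ring

lemma base :
    (1 - X) * (1 + 2 * X - X ^ 2) * PowerSeries.mk (fun j => (tarr 1 (j + 1) : ℚ)) =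
      (1 + X) * (1 - 2 * X - X ^ 2) := by
  have h1 : (1 - X : ℚ⟦X⟧) * (1 + 2 * X - X ^ 2) = 1 + X - 3 * X ^ 2 + X ^ 3 := by ring
  have h2 : (1 + X : ℚ⟦X⟧) * (1 - 2 * X - X ^ 2) = 1 - X - (X ^ 2 + X ^ 2 + X ^ 2) - X ^ 3 := by ring
  rw [h1, h2]
  ext k
  set f := PowerSeries.mk (fun j => (tarr 1 (j + 1) : ℚ)) with hf
  have expand : (1 + X - 3 * X ^ 2 + X ^ 3 : ℚ⟦X⟧) * f
      = f + f * X ^ 1 - (f * X ^ 2 + f * X ^ 2 + f * X ^ 2) + f * X ^ 3 := by ring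
  rw [expand]
  match k with
  | 0 => simp [coeff_mul_X_pow', hf, tarr, coeff_one, coeff_X]
  | 1 => simp [coeff_mul_X_pow', hf, tarr, gseq, coeff_one, coeff_X, coeff_X_pow]; norm_num
  | 2 => simp [coeff_mul_X_pow', hf, tarr, gseq, coeff_one, coeff_X, coeff_X_pow]
  | 3 => simp [coeff_mul_X_pow', hf, tarr, gseq, coeff_one, coeff_X, coeff_X_pow]; norm_num
  | (m+4) =>
    simp only [map_add, map_sub, coeff_mul_X_pow', hf, coeff_mk]
    have h5 : tarr 1 (m + 4 + 1) = -tarr 1 (m + 4) + 3 * tarr 1 (m + 3) - tarr 1 (m + 2) := by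
      simp [tarr, gseq]
    rw [show m + 4 - 1 = m + 3 from rfl, show m + 4 - 2 = m + 2 from rfl,
        show m + 4 - 3 = m + 1 from rfl]
    simp [coeff_one, coeff_X, coeff_X_pow, h5]
    ring

/-- The generating function of the `n`-th row,
`T_n(y) = Σ_{j≥1} t(n,j) y^(j-1)`, satisfies
`(1-y)^n (1+2y-y²) T_n(y) = (1+y)^n (1-2y-y²)` for every `n ≥ 1`. -/
theorem row_generating_function (n : ℕ) (hn : 1 ≤ n) :
    (1 - X) ^ n * (1 + 2 * X - X ^ 2) *
        PowerSeries.mk (fun j => (tarr n (j + 1) : ℚ)) =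
      (1 + X) ^ n * (1 - 2 * X - X ^ 2) := by
  induction n with
  | zero => omega
  | succ m ih =>
    rcases Nat.eq_or_lt_of_le hn with h | h
    · rw [← h]
      simpa [pow_one] using base
    · have hm : 1 ≤ m := by omega
      have key := step m hm
      calc (1 - X) ^ (m+1) * (1 + 2 * X - X ^ 2) *
            PowerSeries.mk (fun j => (tarr (m+1) (j + 1) : ℚ))
          = (1 - X) ^ m * (1 + 2 * X - X ^ 2) *
            ((1 - X) * PowerSeries.mk (fun j => (tarr (m+1) (j + 1) : ℚ))) := by ring
        _ = (1 - X) ^ m * (1 + 2 * X - X ^ 2) *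
            ((1 + X) * PowerSeries.mk (fun j => (tarr m (j + 1) : ℚ))) := by rw [key]
        _ = (1 + X) * ((1 - X) ^ m * (1 + 2 * X - X ^ 2) *
            PowerSeries.mk (fun j => (tarr m (j + 1) : ℚ))) := by ring
        _ = (1 + X) * ((1 + X) ^ m * (1 - 2 * X - X ^ 2)) := by rw [ih hm]
        _ = (1 + X) ^ (m+1) * (1 - 2 * X - X ^ 2) := by ring
end

section
/- Let t be the integer array with t(i,1) = 1, t(1,j) = g(j) (where g(1) = 1, g(2) = -2, g(3) = 2, g(4) = -10, and g(j) = -g(j-1) + 3g(j-2) - g(j-3) for j ≥ 5), and t(i,j) = t(i-1,j-1) + t(i-1,j) + t(i,j-1) for i,j ≥ 2. Then for every n ≥ 1 and every j ≥ 1, the signed convolution Σ_{k=1}^{j} (-1)^{k-1} · t(n,k) · t(n,j+1-k) equals 1 if j = 1 and equals 0 if j ≥ 2. -/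
open PowerSeries

lemma tarr_zero (n : ℕ) : tarr n 0 = 0 := by simp [tarr]
lemma tarr_one (n : ℕ) : tarr n 1 = 1 := by simp [tarr]
lemma tarr_rec (m j : ℕ) :
    tarr (m+2) (j+2) = tarr (m+1) (j+1) + tarr (m+1) (j+2) + tarr (m+2) (j+1) := by
  simp [tarr]

lemma tarr1 (j : ℕ) : tarr 1 j = gseq j := by
  match j with
  | 0 => simp [tarr, gseq]
  | 1 => simp [tarr, gseq]
  | j+2 => simp [tarr]

/-- Generating function of the `n`-th row. -/
noncomputable def Ft (n : ℕ) : PowerSeries ℤ := PowerSeries.mk (tarr n)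

lemma step_s9 (m : ℕ) : (1 - X) * Ft (m+2) = (1 + X) * Ft (m+1) := by
  ext j
  rw [sub_mul, add_mul, one_mul, one_mul, map_sub, map_add]
  cases j with
  | zero => simp [Ft, tarr_zero]
  | succ j =>
    rw [coeff_succ_X_mul, coeff_succ_X_mul]
    simp only [Ft, coeff_mk]
    cases j with
    | zero => simp [tarr_zero, tarr_one]
    | succ j => rw [tarr_rec]; ring

lemma QF1 : ((1 : ℤ⟦X⟧) + X^1 - C (3 : ℤ) * X^2 + X^3) * Ft 1
    = X^1 - X^2 - C (3 : ℤ) * X^3 - X^4 := by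
  ext j
  rw [add_mul, sub_mul, add_mul, one_mul, mul_assoc]
  simp only [map_add, map_sub, Ft, coeff_X_pow_mul', coeff_C_mul, coeff_X_pow, coeff_mk, tarr1]
  match j with
  | 0 => norm_num [gseq]
  | 1 => norm_num [gseq]
  | 2 => norm_num [gseq]
  | 3 => norm_num [gseq]
  | 4 => norm_num [gseq]
  | (j+5) =>
    have h5 : gseq (j+5) = -gseq (j + 4) + 3 * gseq (j + 3) - gseq (j + 2) := by
      simp [gseq]
    rw [if_pos (by omega), if_pos (by omega), if_pos (by omega)]
    simp only [show j+5-1 = j+4 by omega, show j+5-2 = j+3 by omega, show j+5-3 = j+2 by omega]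
    rw [if_neg (by omega), if_neg (by omega), if_neg (by omega), if_neg (by omega), h5]
    ring

lemma rescaleC : rescale (-1 : ℤ) (C (3 : ℤ)) = C (3 : ℤ) := by
  ext n
  simp only [coeff_rescale, coeff_C]
  split_ifs with h <;> simp [h]

lemma G1 : Ft 1 * rescale (-1 : ℤ) (Ft 1) = -X^2 := by
  have h2 := congrArg (rescale (-1 : ℤ)) QF1
  simp only [map_mul, map_add, map_sub, map_one, map_pow, rescale_neg_one_X,
    rescaleC] at h2
  have hu : IsUnit (((1 : ℤ⟦X⟧) + X^1 - C (3 : ℤ) * X^2 + X^3) *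
      ((1 : ℤ⟦X⟧) + (-X)^1 - C (3 : ℤ) * (-X)^2 + (-X)^3)) := by
    rw [PowerSeries.isUnit_iff_constantCoeff]
    simp
  refine hu.mul_left_cancel ?_
  calc ((1 : ℤ⟦X⟧) + X^1 - C (3 : ℤ) * X^2 + X^3) * ((1 : ℤ⟦X⟧) + (-X)^1 - C (3 : ℤ) * (-X)^2 + (-X)^3)
        * (Ft 1 * rescale (-1 : ℤ) (Ft 1))
      = (((1 : ℤ⟦X⟧) + X^1 - C (3 : ℤ) * X^2 + X^3) * Ft 1) *
        (((1 : ℤ⟦X⟧) + (-X)^1 - C (3 : ℤ) * (-X)^2 + (-X)^3) * rescale (-1 : ℤ) (Ft 1)) := by ring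
    _ = ((X : ℤ⟦X⟧)^1 - X^2 - C (3 : ℤ) * X^3 - X^4) *
        ((-X : ℤ⟦X⟧)^1 - (-X)^2 - C (3 : ℤ) * (-X)^3 - (-X)^4) := by rw [QF1, h2]
    _ = ((1 : ℤ⟦X⟧) + X^1 - C (3 : ℤ) * X^2 + X^3) * ((1 : ℤ⟦X⟧) + (-X)^1 - C (3 : ℤ) * (-X)^2 + (-X)^3)
        * (-X^2) := by
      have h3 : (C (3 : ℤ)) = (3 : ℤ⟦X⟧) := by simp [map_ofNat]
      rw [h3]; ring

lemma Gstep (m : ℕ) :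
    Ft (m+2) * rescale (-1 : ℤ) (Ft (m+2)) = Ft (m+1) * rescale (-1 : ℤ) (Ft (m+1)) := by
  have h1 := step_s9 m
  have h2 := congrArg (rescale (-1 : ℤ)) h1
  simp only [map_mul, map_add, map_sub, map_one, rescale_neg_one_X] at h2
  have hu : IsUnit (((1 : ℤ⟦X⟧) - X) * (1 + X)) := by
    rw [PowerSeries.isUnit_iff_constantCoeff]
    simp
  refine hu.mul_left_cancel ?_
  calc ((1 : ℤ⟦X⟧) - X) * (1 + X) * (Ft (m+2) * rescale (-1 : ℤ) (Ft (m+2)))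
      = ((1 - X) * Ft (m+2)) * ((1 - -X) * rescale (-1 : ℤ) (Ft (m+2))) := by ring
    _ = ((1 + X) * Ft (m+1)) * ((1 + -X) * rescale (-1 : ℤ) (Ft (m+1))) := by rw [h1, h2]
    _ = ((1 : ℤ⟦X⟧) - X) * (1 + X) * (Ft (m+1) * rescale (-1 : ℤ) (Ft (m+1))) := by ring

lemma Gn (n : ℕ) (hn : 1 ≤ n) : Ft n * rescale (-1 : ℤ) (Ft n) = -X^2 := by
  induction n with
  | zero => omega
  | succ m ih =>
    match m, ih with
    | 0, _ => exact G1
    | m+1, ih => rw [Gstep m]; exact ih (by omega)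

/-- The signed convolution of each row of the array with itself vanishes except
in degree one: for `n ≥ 1` and `j ≥ 1`,
`Σ_{k=1}^{j} (-1)^(k-1) t(n,k) t(n,j+1-k)` is `1` if `j = 1` and `0` otherwise. -/
theorem tarr_signed_convolution (n j : ℕ) (hn : 1 ≤ n) (hj : 1 ≤ j) :
    ∑ k ∈ Finset.Icc 1 j, (-1 : ℤ) ^ (k - 1) * tarr n k * tarr n (j + 1 - k) =
      if j = 1 then 1 else 0 := by
  have h := congrArg (coeff (R := ℤ) (j+1)) (Gn n hn)
  rw [coeff_mul, Finset.Nat.sum_antidiagonal_eq_sum_range_succ_mk] at h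
  simp only [Ft, coeff_mk, coeff_rescale] at h
  rw [← Finset.sum_subset (s₁ := Finset.Icc 1 j)
      (fun k hk => Finset.mem_range.2 (by have := (Finset.mem_Icc.1 hk).2; omega))
      (fun k hk hk2 => by
        have hor : k = 0 ∨ k = j + 1 := by
          simp only [Finset.mem_Icc, not_and_or, not_le] at hk2
          have := Finset.mem_range.1 hk; omega
        rcases hor with rfl | rfl <;> simp [tarr_zero])] at h
  have key : ∀ k ∈ Finset.Icc 1 j, tarr n k * ((-1 : ℤ)^(j+1-k) * tarr n (j+1-k))
      = (-(-1 : ℤ)^(j-1)) * ((-1 : ℤ)^(k-1) * tarr n k * tarr n (j+1-k)) := by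
    intro k hk
    rcases Finset.mem_Icc.1 hk with ⟨hk1, hk2⟩
    have e1 : j + 1 - k = (j - k) + 1 := by omega
    have e2 : (j - k) + (k - 1) = j - 1 := by omega
    have sq : ((-1 : ℤ)^(k-1)) * ((-1 : ℤ)^(k-1)) = 1 := by
      rw [← pow_add]
      exact Even.neg_one_pow ⟨k - 1, rfl⟩
    have e3 : (-1 : ℤ)^(j-k) = (-1 : ℤ)^(j-1) * (-1 : ℤ)^(k-1) := by
      calc (-1 : ℤ)^(j-k) = (-1 : ℤ)^(j-k) * (((-1 : ℤ)^(k-1)) * ((-1 : ℤ)^(k-1))) := by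
            rw [sq, mul_one]
        _ = ((-1 : ℤ)^(j-k) * (-1 : ℤ)^(k-1)) * (-1 : ℤ)^(k-1) := by ring
        _ = (-1 : ℤ)^(j-1) * (-1 : ℤ)^(k-1) := by rw [← pow_add, e2]
    rw [e1, pow_succ, e3]
    ring
  rw [Finset.sum_congr rfl key, ← Finset.mul_sum] at h
  have hrhs : (coeff (R := ℤ) (j+1)) (-X^2 : ℤ⟦X⟧) = -(if j = 1 then 1 else 0) := by
    rw [map_neg, coeff_X_pow]
    by_cases hj1 : j = 1 <;> simp [hj1]
  rw [hrhs] at h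
  have hne : (-(-1 : ℤ)^(j-1)) ≠ 0 := by simp
  refine mul_left_cancel₀ hne (h.trans ?_)
  by_cases hj1 : j = 1
  · subst hj1; norm_num
  · simp [hj1]
end

section
/- Let t be the integer array with t(i,1) = 1, t(1,j) = g(j) (where g(1) = 1, g(2) = -2, g(3) = 2, g(4) = -10, and g(j) = -g(j-1) + 3g(j-2) - g(j-3) for j ≥ 5), and t(i,j) = t(i-1,j-1) + t(i-1,j) + t(i,j-1) for i,j ≥ 2. Then for every n ≥ 1, the consecutive diagonal entries satisfy t(n,n) + t(n+1,n+1) = Sch(n-1), where Sch(m) = Σ_{k=0}^{m} Catalan(k) · C(m+k, 2k) is the m-th large Schröder number. -/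
/-- The large Schröder numbers. -/
def schroeder (m : ℕ) : ℕ := ∑ k ∈ Finset.range (m + 1), catalan k * (m + k).choose (2 * k)

namespace SchrAux
open Finset


def del (a b : ℕ) : ℕ := ∑ k ∈ Finset.range (b+1), a.choose k * b.choose k * 2^k

lemma del_ext (a b R : ℕ) (h : b + 1 ≤ R) :
    del a b = ∑ k ∈ Finset.range R, a.choose k * b.choose k * 2^k := by
  apply Finset.sum_subset (Finset.range_subset_range.2 h)
  intro k _ hk
  simp only [Finset.mem_range, not_lt] at hk
  rw [Nat.choose_eq_zero_of_lt (by omega : b < k)]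
  ring

lemma del_symm (a b : ℕ) : del a b = del b a := by
  rw [del_ext a b (a+b+1) (by omega), del_ext b a (a+b+1) (by omega)]
  exact Finset.sum_congr rfl fun k _ => by ring

lemma del_zero_right (a : ℕ) : del a 0 = 1 := by simp [del]

lemma del_zero_left (b : ℕ) : del 0 b = 1 := by rw [del_symm]; exact del_zero_right b

lemma del_rec (a b : ℕ) :
    del (a+1) (b+1) = del a b + del a (b+1) + del (a+1) b := by
  set A := ∑ k ∈ Finset.range (b+1), a.choose k * b.choose k * 2^k with hA
  set B := ∑ k ∈ Finset.range (b+1), a.choose k * b.choose (k+1) * 2^k with hB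
  set C := ∑ k ∈ Finset.range (b+1), a.choose (k+1) * b.choose k * 2^k with hC
  set E := ∑ k ∈ Finset.range (b+1), a.choose (k+1) * b.choose (k+1) * 2^k with hE
  have extB : ∑ k ∈ Finset.range b, a.choose k * b.choose (k+1) * 2^k = B := by
    rw [hB]
    apply Finset.sum_subset (Finset.range_subset_range.2 (Nat.le_succ b))
    intro k _ hk
    simp only [Finset.mem_range, not_lt] at hk
    rw [Nat.choose_eq_zero_of_lt (by omega : b < k + 1)]
    ring
  have extE : ∑ k ∈ Finset.range b, a.choose (k+1) * b.choose (k+1) * 2^k = E := by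
    rw [hE]
    apply Finset.sum_subset (Finset.range_subset_range.2 (Nat.le_succ b))
    intro k _ hk
    simp only [Finset.mem_range, not_lt] at hk
    rw [Nat.choose_eq_zero_of_lt (by omega : b < k + 1)]
    ring
  have h4 : del a b = 1 + 2 * E := by
    rw [del, Finset.sum_range_succ']
    simp only [Nat.choose_zero_right, pow_zero, mul_one, one_mul]
    rw [← extE, Finset.mul_sum]
    rw [Nat.add_comm]
    congr 1
    exact Finset.sum_congr rfl fun k _ => by ring
  have h2 : del a (b+1) = 1 + 2 * C + 2 * E := by
    rw [del, Finset.sum_range_succ']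
    simp only [Nat.choose_zero_right, pow_zero, mul_one, one_mul]
    have : ∀ k ∈ Finset.range (b+1), a.choose (k+1) * (b+1).choose (k+1) * 2^(k+1)
        = 2 * (a.choose (k+1) * b.choose k * 2^k) + 2 * (a.choose (k+1) * b.choose (k+1) * 2^k) := by
      intro k _
      rw [Nat.choose_succ_succ' b k]
      ring
    rw [Finset.sum_congr rfl this, Finset.sum_add_distrib, ← Finset.mul_sum, ← Finset.mul_sum]
    omega
  have h3 : del (a+1) b = 1 + 2 * B + 2 * E := by
    rw [del_ext (a+1) b (b+2) (by omega), Finset.sum_range_succ']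
    simp only [Nat.choose_zero_right, pow_zero, mul_one, one_mul]
    have : ∀ k ∈ Finset.range (b+1), (a+1).choose (k+1) * b.choose (k+1) * 2^(k+1)
        = 2 * (a.choose k * b.choose (k+1) * 2^k) + 2 * (a.choose (k+1) * b.choose (k+1) * 2^k) := by
      intro k _
      rw [Nat.choose_succ_succ' a k]
      ring
    rw [Finset.sum_congr rfl this, Finset.sum_add_distrib, ← Finset.mul_sum, ← Finset.mul_sum]
    omega
  have h1 : del (a+1) (b+1) = 1 + 2 * A + 2 * B + 2 * C + 2 * E := by
    rw [del, Finset.sum_range_succ']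
    simp only [Nat.choose_zero_right, pow_zero, mul_one, one_mul]
    have : ∀ k ∈ Finset.range (b+1), (a+1).choose (k+1) * (b+1).choose (k+1) * 2^(k+1)
        = 2 * (a.choose k * b.choose k * 2^k) + 2 * (a.choose k * b.choose (k+1) * 2^k)
          + 2 * (a.choose (k+1) * b.choose k * 2^k) + 2 * (a.choose (k+1) * b.choose (k+1) * 2^k) := by
      intro k _
      rw [Nat.choose_succ_succ' a k, Nat.choose_succ_succ' b k]
      ring
    rw [Finset.sum_congr rfl this]
    simp only [Finset.sum_add_distrib, ← Finset.mul_sum]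
    omega
  have hAd : del a b = A := rfl
  omega
lemma del_one_left (b : ℕ) : del 1 b = 2*b + 1 := by
  induction b with
  | zero => simp [del_zero_right]
  | succ b ih =>
      have := del_rec 0 b
      rw [del_zero_left, del_zero_left] at this
      norm_num at this ⊢
      omega

lemma del_two_left (b : ℕ) : del 2 b = 2*b*b + 2*b + 1 := by
  induction b with
  | zero => simp [del_zero_right]
  | succ b ih =>
      have := del_rec 1 b
      rw [del_one_left, del_one_left] at this
      norm_num at this ⊢
      nlinarith [ih, this]

lemma del_one_right (a : ℕ) : del a 1 = 2*a + 1 := by rw [del_symm]; exact del_one_left a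
lemma del_two_right (a : ℕ) : del a 2 = 2*a*a + 2*a + 1 := by rw [del_symm]; exact del_two_left a

lemma vandermonde_inst (a c b : ℕ) :
    (a + c).choose b = ∑ p ∈ Finset.range (b+1), a.choose p * c.choose (b - p) := by
  rw [Nat.add_choose_eq]
  exact Finset.Nat.sum_antidiagonal_eq_sum_range_succ (fun p q => a.choose p * c.choose q) b

lemma del_T (a b : ℕ) :
    del a b = ∑ i ∈ Finset.range (b+1), b.choose i * (a + b - i).choose b := by
  have step1 : del a b
      = ∑ k ∈ Finset.range (b+1), ∑ i ∈ Finset.range (b+1),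
          a.choose k * b.choose k * k.choose i := by
    rw [del]
    apply Finset.sum_congr rfl
    intro k hk
    simp only [Finset.mem_range] at hk
    have h2k : (2:ℕ)^k = ∑ i ∈ Finset.range (b+1), k.choose i := by
      rw [← Nat.sum_range_choose k]
      apply Finset.sum_subset (Finset.range_subset_range.2 (by omega))
      intro i _ hi
      simp only [Finset.mem_range, not_lt] at hi
      exact Nat.choose_eq_zero_of_lt (by omega)
    rw [h2k, Finset.mul_sum]
  rw [step1, Finset.sum_comm]
  apply Finset.sum_congr rfl
  intro i hi
  simp only [Finset.mem_range] at hi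
  have hib : i ≤ b := by omega
  have key : ∀ k, k ≤ b → b.choose k * k.choose i = b.choose i * (b-i).choose (b-k) := by
    intro k hk
    rcases le_or_gt i k with h | h
    · rw [Nat.choose_mul h]
      congr 1
      exact Nat.choose_symm_of_eq_add (by omega : b - i = (k-i) + (b-k))
    · rw [Nat.choose_eq_zero_of_lt h, Nat.choose_eq_zero_of_lt (by omega : b - i < b - k)]
      ring
  have hadd : a + (b - i) = a + b - i := by omega
  rw [← hadd, vandermonde_inst a (b-i) b, Finset.mul_sum]
  apply Finset.sum_congr rfl
  intro k hk
  simp only [Finset.mem_range] at hk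
  rw [mul_assoc, key k (by omega)]
  ring
lemma cat_diff (k : ℕ) : catalan k + (2*k).choose (k+1) = (2*k).choose k := by
  apply Nat.eq_of_mul_eq_mul_left (Nat.succ_pos k)
  have h1 : (k+1) * catalan k = (2*k).choose k := by
    rw [succ_mul_catalan_eq_centralBinom, Nat.centralBinom]
  have h2 : (2*k).choose (k+1) * (k+1) = (2*k).choose k * (2*k - k) := Nat.choose_succ_right_eq (2*k) k
  have h3 : 2*k - k = k := by omega
  rw [h3] at h2
  nlinarith [h1, h2]

lemma trinom (a m r : ℕ) (h : r ≤ m) :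
    a.choose m * m.choose r = a.choose r * (a - r).choose (m - r) := by
  rcases le_or_gt m a with ham | ham
  · exact Nat.choose_mul h
  · rw [Nat.choose_eq_zero_of_lt ham]
    rcases le_or_gt r a with har | har
    · rw [Nat.choose_eq_zero_of_lt (by omega : a - r < m - r)]
      ring
    · rw [Nat.choose_eq_zero_of_lt har]
      ring

lemma star (s k : ℕ) :
    catalan (k+1) * (s+2+k).choose (2*k+2) + s.choose k * (s+2+k).choose (k+2)
      = (s+1).choose (k+1) * (s+2+k).choose (k+1) := by
  have h1 := trinom (s+2+k) (2*k+2) (k+1) (by omega)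
  have e1 : s+2+k - (k+1) = s+1 := by omega
  have e2 : 2*k+2 - (k+1) = k+1 := by omega
  rw [e1, e2] at h1
  have h2 := trinom (s+2+k) (2*k+2) (k+2) (by omega)
  have e3 : s+2+k - (k+2) = s := by omega
  have e4 : 2*k+2 - (k+2) = k := by omega
  rw [e3, e4] at h2
  have h3 := cat_diff (k+1)
  have e5 : 2*(k+1) = 2*k+2 := by ring
  rw [e5] at h3
  -- multiply h3 by (s+2+k).choose (2*k+2)
  have h4 : catalan (k+1) * (s+2+k).choose (2*k+2)
      + (s+2+k).choose (2*k+2) * (2*k+2).choose (k+2)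
      = (s+2+k).choose (2*k+2) * (2*k+2).choose (k+1) := by
    nlinarith [h3]
  rw [h1, h2] at h4
  nlinarith [h4]

lemma core (s : ℕ) : schroeder (s+1) + del (s+2) s = del (s+1) (s+1) := by
  have hP : del (s+1) (s+1)
      = ∑ k ∈ Finset.range (s+2), (s+1).choose k * (s+1+k).choose (k) := by
    rw [del_T]
    rw [← Finset.sum_range_reflect]
    apply Finset.sum_congr rfl
    intro k hk
    simp only [Finset.mem_range] at hk
    have e1 : s + 2 - 1 - k = s + 1 - k := by omega
    rw [e1]
    have e2 : (s+1).choose (s+1-k) = (s+1).choose k := Nat.choose_symm (by omega)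
    have e3 : s+1 + (s+1) - (s+1-k) = s+1+k := by omega
    rw [e2, e3]
    congr 1
    exact Nat.choose_symm_of_eq_add (by omega : s+1+k = (s+1) + k)
  have hQ : del (s+2) s
      = ∑ k ∈ Finset.range (s+1), s.choose k * (s+2+k).choose (k+2) := by
    rw [del_T]
    rw [← Finset.sum_range_reflect]
    apply Finset.sum_congr rfl
    intro k hk
    simp only [Finset.mem_range] at hk
    have e1 : s + 1 - 1 - k = s - k := by omega
    rw [e1]
    have e2 : s.choose (s-k) = s.choose k := Nat.choose_symm (by omega)
    have e3 : s+2 + s - (s-k) = s+2+k := by omega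
    rw [e2, e3]
    congr 1
    exact Nat.choose_symm_of_eq_add (by omega : s+2+k = s + (k+2))
  have hS : schroeder (s+1)
      = 1 + ∑ k ∈ Finset.range (s+1), catalan (k+1) * (s+2+k).choose (2*k+2) := by
    rw [schroeder, Finset.sum_range_succ']
    simp only [catalan_zero, Nat.choose_zero_right, mul_one, one_mul, Nat.mul_zero]
    rw [Nat.add_comm]
    congr 1
    apply Finset.sum_congr rfl
    intro k _
    have e1 : s+1+(k+1) = s+2+k := by ring
    have e2 : 2*(k+1) = 2*k+2 := by ring
    rw [e1, e2]
  have hP' : del (s+1) (s+1)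
      = 1 + ∑ k ∈ Finset.range (s+1), (s+1).choose (k+1) * (s+2+k).choose (k+1) := by
    rw [hP, Finset.sum_range_succ']
    simp only [Nat.choose_zero_right, mul_one, one_mul]
    rw [Nat.add_comm]
    congr 1
    apply Finset.sum_congr rfl
    intro k _
    have e1 : s+1+(k+1) = s+2+k := by ring
    rw [e1]
  rw [hS, hQ, hP', Nat.add_assoc, ← Finset.sum_add_distrib]
  congr 1
  apply Finset.sum_congr rfl
  intro k _
  exact star s k
lemma tarr_rec (i j : ℕ) : tarr (i+2) (j+2)
    = tarr (i+1) (j+1) + tarr (i+1) (j+2) + tarr (i+2) (j+1) := by simp [tarr]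

lemma tarr_one (i : ℕ) : tarr i 1 = 1 := by simp [tarr]

lemma tarr_row1 (j : ℕ) : tarr 1 (j+2) = gseq (j+2) := by simp [tarr]

lemma L1 : ∀ i : ℕ, tarr (i+2) 2 = 2*(i:ℤ) := by
  intro i
  induction i with
  | zero => norm_num [tarr, gseq]
  | succ i ih =>
      have h : tarr (i+3) 2 = tarr (i+2) 1 + tarr (i+2) 2 + tarr (i+3) 1 := tarr_rec (i+1) 0
      rw [tarr_one, tarr_one] at h
      show tarr (i+3) 2 = 2*((i:ℤ)+1)
      rw [h, ih]
      ring

lemma L2 : ∀ j : ℕ, gseq (j+4) + 2*gseq (j+3) - gseq (j+2) = -4 := by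
  intro j
  induction j with
  | zero => norm_num [gseq]
  | succ j ih =>
      have h : gseq (j+5) = -gseq (j+4) + 3*gseq (j+3) - gseq (j+2) := by simp [gseq]
      show gseq (j+5) + 2*gseq (j+4) - gseq (j+3) = -4
      linarith [h, ih]

lemma L3 : ∀ j : ℕ, gseq (j+2) + tarr 2 (j+3) = -4*(j:ℤ) - 2 := by
  intro j
  induction j with
  | zero => norm_num [tarr, gseq]
  | succ j ih =>
      have h : tarr 2 (j+4) = tarr 1 (j+3) + tarr 1 (j+4) + tarr 2 (j+3) := tarr_rec 0 (j+2)
      rw [show tarr 1 (j+3) = gseq (j+3) from tarr_row1 (j+1),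
        show tarr 1 (j+4) = gseq (j+4) from tarr_row1 (j+2)] at h
      show gseq (j+3) + tarr 2 (j+4) = -4*((j:ℤ)+1) - 2
      have l2 := L2 j
      linarith [h, ih, l2]

noncomputable def Gd (i j : ℕ) : ℤ :=
  (del i j : ℤ) + 2*(del i (j+1) : ℤ) + (del i (j+2) : ℤ) - 2*(del (i+2) j : ℤ)

lemma Gd_zero_left (m : ℕ) : Gd 0 m = 2 - 4*(m:ℤ)^2 - 4*(m:ℤ) := by
  unfold Gd
  rw [del_zero_left, del_zero_left, del_zero_left, del_two_left]
  push_cast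
  ring

lemma Gd_zero_right (m : ℕ) : Gd m 0 = 2*(m:ℤ)^2 + 6*(m:ℤ) + 2 := by
  unfold Gd
  rw [del_zero_right, del_one_right, del_two_right, del_zero_right]
  push_cast
  ring

lemma Gd_rec (i j : ℕ) : Gd (i+1) (j+1) = Gd i j + Gd i (j+1) + Gd (i+1) j := by
  have r1 : (del (i+1) (j+1) : ℤ) = del i j + del i (j+1) + del (i+1) j := by
    exact_mod_cast (del_rec i j)
  have r2 : (del (i+1) (j+2) : ℤ) = del i (j+1) + del i (j+2) + del (i+1) (j+1) := by
    exact_mod_cast (del_rec i (j+1))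
  have r3 : (del (i+1) (j+3) : ℤ) = del i (j+2) + del i (j+3) + del (i+1) (j+2) := by
    exact_mod_cast (del_rec i (j+2))
  have r4 : (del (i+3) (j+1) : ℤ) = del (i+2) j + del (i+2) (j+1) + del (i+3) j := by
    exact_mod_cast (del_rec (i+2) j)
  show (del (i+1) (j+1) : ℤ) + 2*((del (i+1) (j+2) : ℤ)) + (del (i+1) (j+3) : ℤ)
        - 2*((del (i+3) (j+1) : ℤ))
      = ((del i j : ℤ) + 2*((del i (j+1) : ℤ)) + (del i (j+2) : ℤ) - 2*((del (i+2) j : ℤ)))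
      + ((del i (j+1) : ℤ) + 2*((del i (j+2) : ℤ)) + (del i (j+3) : ℤ) - 2*((del (i+2) (j+1) : ℤ)))
      + ((del (i+1) j : ℤ) + 2*((del (i+1) (j+1) : ℤ)) + (del (i+1) (j+2) : ℤ)
          - 2*((del (i+3) j : ℤ)))
  linarith [r1, r2, r3, r4]

lemma main (i : ℕ) : ∀ j : ℕ, tarr (i+2) (j+2) + tarr (i+3) (j+3) = Gd i j := by
  induction i with
  | zero =>
      intro j
      induction j with
      | zero =>
          rw [Gd_zero_left]
          norm_num [tarr, gseq]
      | succ j ihj =>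
          have h1 : tarr 2 (j+3) = tarr 1 (j+2) + tarr 1 (j+3) + tarr 2 (j+2) := tarr_rec 0 (j+1)
          have h2 : tarr 3 (j+4) = tarr 2 (j+3) + tarr 2 (j+4) + tarr 3 (j+3) := tarr_rec 1 (j+2)
          rw [show tarr 1 (j+2) = gseq (j+2) from tarr_row1 j,
            show tarr 1 (j+3) = gseq (j+3) from tarr_row1 (j+1)] at h1
          have l3a := L3 j
          have l3b : gseq (j+3) + tarr 2 (j+4) = -4*((j:ℤ)+1) - 2 := by
            have := L3 (j+1); push_cast at this; convert this using 2 <;> push_cast <;> ring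
          rw [Gd_zero_left] at ihj
          have goal2 : tarr 2 (j+3) + tarr 3 (j+4) = 2 - 4*((j:ℤ)+1)^2 - 4*((j:ℤ)+1) := by
            nlinarith [h1, h2, ihj, l3a, l3b]
          show tarr 2 (j+3) + tarr 3 (j+4) = Gd 0 (j+1)
          rw [Gd_zero_left]
          push_cast
          linarith [goal2]
  | succ i ih =>
      intro j
      induction j with
      | zero =>
          have h1 : tarr (i+3) 2 = tarr (i+2) 1 + tarr (i+2) 2 + tarr (i+3) 1 := tarr_rec (i+1) 0
          have h2 : tarr (i+4) 3 = tarr (i+3) 2 + tarr (i+3) 3 + tarr (i+4) 2 := tarr_rec (i+2) 1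
          have h3 : tarr (i+2) 2 + tarr (i+3) 3 = Gd i 0 := ih 0
          rw [tarr_one, tarr_one] at h1
          have l1 := L1 i
          have l2 : tarr (i+4) 2 = 2*((i:ℤ)+2) := by
            have := L1 (i+2); push_cast at this; convert this using 2 <;> push_cast <;> ring
          rw [Gd_zero_right] at h3
          have goal2 : tarr (i+3) 2 + tarr (i+4) 3 = 2*((i:ℤ)+1)^2 + 6*((i:ℤ)+1) + 2 := by
            nlinarith [h1, h2, h3, l1, l2]
          show tarr (i+3) 2 + tarr (i+4) 3 = Gd (i+1) 0
          rw [Gd_zero_right]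
          push_cast
          linarith [goal2]
      | succ j ihj =>
          have h1 : tarr (i+3) (j+3)
              = tarr (i+2) (j+2) + tarr (i+2) (j+3) + tarr (i+3) (j+2) := tarr_rec (i+1) (j+1)
          have h2 : tarr (i+4) (j+4)
              = tarr (i+3) (j+3) + tarr (i+3) (j+4) + tarr (i+4) (j+3) := tarr_rec (i+2) (j+2)
          have e1 : tarr (i+2) (j+2) + tarr (i+3) (j+3) = Gd i j := ih j
          have e2 : tarr (i+2) (j+3) + tarr (i+3) (j+4) = Gd i (j+1) := ih (j+1)
          have e3 : tarr (i+3) (j+2) + tarr (i+4) (j+3) = Gd (i+1) j := ihj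
          have gr := Gd_rec i j
          show tarr (i+3) (j+3) + tarr (i+4) (j+4) = Gd (i+1) (j+1)
          rw [gr]
          linarith [h1, h2, e1, e2, e3]

lemma diag (n : ℕ) : tarr (n+2) (n+2) + tarr (n+3) (n+3) = (schroeder (n+1) : ℤ) := by
  rw [main n n]
  have hc : (schroeder (n+1) : ℤ) + del (n+2) n = del (n+1) (n+1) := by
    exact_mod_cast core n
  have hs : (del n (n+2) : ℤ) = del (n+2) n := by exact_mod_cast del_symm n (n+2)
  have hs2 : (del (n+1) n : ℤ) = del n (n+1) := by exact_mod_cast del_symm (n+1) n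
  have hr : (del (n+1) (n+1) : ℤ) = del n n + del n (n+1) + del (n+1) n := by
    exact_mod_cast del_rec n n
  show (del n n : ℤ) + 2*((del n (n+1) : ℤ)) + (del n (n+2) : ℤ) - 2*((del (n+2) n : ℤ))
      = (schroeder (n+1) : ℤ)
  linarith [hc, hs, hs2, hr]

end SchrAux

/-- Consecutive diagonal entries of the array sum to a large Schröder number:
`t(n,n) + t(n+1,n+1) = Sch(n-1)` for `n ≥ 1`. -/
theorem tarr_diag_add_eq_schroeder (n : ℕ) (hn : 1 ≤ n) :
    tarr n n + tarr (n + 1) (n + 1) = (schroeder (n - 1) : ℤ) := by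
  match n, hn with
  | 1, _ =>
      show tarr 1 1 + tarr 2 2 = (schroeder 0 : ℤ)
      norm_num [tarr, gseq, schroeder]
  | (m+2), _ =>
      show tarr (m+2) (m+2) + tarr (m+3) (m+3) = (schroeder (m+1) : ℤ)
      exact SchrAux.diag m
end

section
/- Let t be the integer array with t(i,1) = 1, t(1,j) = g(j) (where g(1) = 1, g(2) = -2, g(3) = 2, g(4) = -10, and g(j) = -g(j-1) + 3g(j-2) - g(j-3) for j ≥ 5), and t(i,j) = t(i-1,j-1) + t(i-1,j) + t(i,j-1) for i,j ≥ 2. Let A(z) = Σ_{n≥1} t(n,n) z^{n-1} be the generating function of the diagonal entries, viewed as a formal power series over ℚ. Then A satisfies the quadratic equation (1+z)²·A(z)² − (1+z)(3−z)·A(z) + 2 = 0. -/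
open PowerSeries
open Finset

namespace DiagGF


/-- Large Schröder numbers. -/
def schroeder : ℕ → ℚ
  | 0 => 1
  | n + 1 => schroeder n + ∑ k ∈ (Finset.range (n+1)).attach,
      schroeder k * schroeder (n - k)
decreasing_by
  · exact Nat.lt_succ_self n
  · exact Nat.lt_succ_of_le (Nat.le_of_lt_succ (Finset.mem_range.mp k.2))
  · exact Nat.lt_succ_of_le (Nat.sub_le _ _)

lemma schroeder_succ (n : ℕ) :
    schroeder (n+1) = schroeder n + ∑ k ∈ Finset.range (n+1),
      schroeder k * schroeder (n - k) := by
  rw [schroeder]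
  congr 1
  exact Finset.sum_attach (Finset.range (n+1)) (fun k => schroeder k * schroeder (n - k))

noncomputable def Sq : PowerSeries ℚ := PowerSeries.mk schroeder

lemma schEq : X * Sq^2 + (X - 1) * Sq + 1 = 0 := by
  ext n
  rcases n with _ | n
  · simp [Sq, schroeder]
  · have h1 : (coeff (n+1)) (X * Sq^2) = (coeff n) (Sq^2) := coeff_succ_X_mul n _
    have h2 : (coeff (n+1)) ((X - 1) * Sq) = (coeff n) Sq - (coeff (n+1)) Sq := by
      rw [sub_mul, one_mul, map_sub, coeff_succ_X_mul]
    have h3 : (coeff n) (Sq^2) = ∑ k ∈ Finset.range (n+1), schroeder k * schroeder (n - k) := by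
      rw [sq, PowerSeries.coeff_mul, Finset.Nat.sum_antidiagonal_eq_sum_range_succ_mk]
      simp [Sq]
    simp only [map_add, h1, h2, h3, map_one, map_zero, coeff_one]
    simp [Sq, schroeder_succ n]

noncomputable def w : PowerSeries ℚ := X * Sq

lemma hw0 : constantCoeff w = 0 := by simp [w]

lemma R1 : w^2 - (1 - X) * w + X = 0 := by
  have : w^2 - (1 - X) * w + X = X * (X * Sq^2 + (X - 1) * Sq + 1) := by
    rw [w]; ring
  rw [this, schEq, mul_zero]

lemma coeff_w_pow_lt {n k : ℕ} (h : n < k) : coeff n (w^k) = 0 := by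
  have : w^k = X^k * Sq^k := by rw [w, mul_pow]
  rw [this, PowerSeries.coeff_X_pow_mul']
  simp [Nat.not_le.mpr h]

noncomputable def Gps : PowerSeries ℚ := PowerSeries.mk (fun j => (gseq j : ℚ))

lemma hG : (1 + X - 3*X^2 + X^3) * Gps = X - X^2 - 3*X^3 - X^4 := by
  have h3 : (C 3 : PowerSeries ℚ) = 3 := map_ofNat _ 3
  have expand : (1 + X - 3*X^2 + X^3) * Gps
      = Gps + X^1*Gps - (C 3)*(X^2*Gps) + X^3*Gps := by rw [h3]; ring
  have expandR : (X - X^2 - 3*X^3 - X^4 : PowerSeries ℚ)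
      = X^1 - X^2 - (C 3)*X^3 - X^4 := by rw [h3]; ring
  ext n
  rw [expand, expandR]
  simp only [map_add, map_sub, coeff_C_mul, coeff_X_pow_mul', coeff_X_pow, Gps, coeff_mk]
  rcases n with _|_|_|_|_|n
  · norm_num [gseq]
  · norm_num [gseq]
  · norm_num [gseq]
  · norm_num [gseq]
  · norm_num [gseq]
  · simp only [show n+1+1+1+1+1 = n + 5 by ring]
    have h5 : gseq (n+5) = -gseq (n + 4) + 3 * gseq (n + 3) - gseq (n + 2) := by
      conv_lhs => rw [gseq]
    rw [if_pos (by omega : 1 ≤ n + 5), if_pos (by omega : 2 ≤ n + 5),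
      if_pos (by omega : 3 ≤ n + 5),
      if_neg (by omega : ¬ (n + 5 = 1)), if_neg (by omega : ¬ (n + 5 = 2)),
      if_neg (by omega : ¬ (n + 5 = 3)), if_neg (by omega : ¬ (n + 5 = 4))]
    rw [show n + 5 - 1 = n + 4 by omega, show n + 5 - 2 = n + 3 by omega,
      show n + 5 - 3 = n + 2 by omega, h5]
    push_cast
    ring

noncomputable def Lser : PowerSeries ℚ := PowerSeries.mk (fun k => coeff (k+1) ((1 - X) * Gps))

lemma hL : X * Lser = (1 - X) * Gps := by
  ext n
  rcases n with _|n
  · simp [Lser, Gps, gseq, PowerSeries.coeff_zero_eq_constantCoeff, map_mul]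
  · rw [coeff_succ_X_mul]
    simp [Lser]

lemma hdagger : Lser * (X^2 - 2*X - 1) = (X + 1) * (X^2 + 2*X - 1) := by
  have hX : (X : PowerSeries ℚ) ≠ 0 := X_ne_zero
  apply mul_left_cancel₀ hX
  calc X * (Lser * (X^2 - 2*X - 1)) = (X * Lser) * (X^2 - 2*X - 1) := by ring
    _ = (1 - X) * Gps * (X^2 - 2*X - 1) := by rw [hL]
    _ = -(((1 + X - 3*X^2 + X^3) * Gps)) := by ring
    _ = -(X - X^2 - 3*X^3 - X^4) := by rw [hG]
    _ = X * ((X + 1) * (X^2 + 2*X - 1)) := by ring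


noncomputable def sigma (f : PowerSeries ℚ) : PowerSeries ℚ :=
  PowerSeries.mk fun n => ∑ k ∈ Finset.range (n+1), coeff k f * coeff n (w^k)

lemma evc (N : ℕ) (f : PowerSeries ℚ) (n : ℕ) :
    coeff n (Polynomial.aeval w (trunc N f))
      = ∑ k ∈ Finset.range N, coeff k f * coeff n (w^k) := by
  induction N with
  | zero => simp [PowerSeries.trunc_zero']
  | succ N ih =>
    rw [PowerSeries.trunc_succ, map_add, map_add, ih, Finset.sum_range_succ,
      Polynomial.aeval_monomial]
    congr 1
    rw [← PowerSeries.C_eq_algebraMap, coeff_C_mul]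

lemma sigma_coeff_eq {n N : ℕ} (h : n < N) (f : PowerSeries ℚ) :
    coeff n (sigma f) = coeff n (Polynomial.aeval w (trunc N f)) := by
  rw [evc, sigma, coeff_mk]
  apply Finset.sum_subset
  · exact Finset.range_subset_range.mpr h
  · intro k _ hk
    rw [coeff_w_pow_lt (by simpa using hk), mul_zero]

lemma ord_aeval {p : Polynomial ℚ} {N n : ℕ} (h : ∀ k < N, p.coeff k = 0) (hn : n < N) :
    coeff n (Polynomial.aeval w p) = 0 := by
  rw [Polynomial.aeval_eq_sum_range, map_sum]
  apply Finset.sum_eq_zero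
  intro i _
  rw [LinearMap.map_smul]
  rcases lt_or_ge i N with hi | hi
  · rw [h i hi, zero_smul]
  · rw [coeff_w_pow_lt (lt_of_lt_of_le hn hi), smul_zero]

lemma sigma_mul (f g : PowerSeries ℚ) : sigma (f * g) = sigma f * sigma g := by
  ext n
  have h2 : coeff n (Polynomial.aeval w (trunc (n+1) f * trunc (n+1) g))
      = coeff n (Polynomial.aeval w (trunc (n+1) (f * g))) := by
    have hd : ∀ k < n+1, (trunc (n+1) f * trunc (n+1) g - trunc (n+1) (f*g)).coeff k = 0 := by
      intro k hk
      rw [Polynomial.coeff_sub, Polynomial.coeff_mul, PowerSeries.coeff_trunc, if_pos hk,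
        PowerSeries.coeff_mul, sub_eq_zero]
      apply Finset.sum_congr rfl
      rintro ⟨a, b⟩ hab
      rw [Finset.HasAntidiagonal.mem_antidiagonal] at hab
      rw [PowerSeries.coeff_trunc, if_pos (by omega), PowerSeries.coeff_trunc, if_pos (by omega)]
    have := ord_aeval hd (Nat.lt_succ_self n)
    rw [map_sub, map_sub] at this
    linarith [this]
  rw [sigma_coeff_eq (Nat.lt_succ_self n), ← h2, map_mul, PowerSeries.coeff_mul,
    PowerSeries.coeff_mul]
  apply Finset.sum_congr rfl
  rintro ⟨a, b⟩ hab
  rw [Finset.HasAntidiagonal.mem_antidiagonal] at hab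
  rw [sigma_coeff_eq (show a < n+1 by omega), sigma_coeff_eq (show b < n+1 by omega)]

lemma sigma_add (f g : PowerSeries ℚ) : sigma (f + g) = sigma f + sigma g := by
  ext n
  simp [sigma, Finset.sum_add_distrib, add_mul]

lemma sigma_neg (f : PowerSeries ℚ) : sigma (-f) = - sigma f := by
  ext n
  simp [sigma, Finset.sum_neg_distrib, neg_mul]

lemma sigma_one : sigma 1 = 1 := by
  ext n
  rw [sigma, coeff_mk]
  rw [Finset.sum_eq_single 0]
  · simp
  · intro k _ hk
    simp [coeff_one, hk]
  · simp
lemma sigma_X : sigma X = w := by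
  ext n
  rw [sigma, coeff_mk]
  rcases n with _|n
  · simp [PowerSeries.coeff_X, PowerSeries.coeff_zero_eq_constantCoeff, hw0]
  · rw [Finset.sum_eq_single 1]
    · simp
    · intro k _ hk
      simp [PowerSeries.coeff_X, hk]
    · intro h
      exact absurd (Finset.mem_range.mpr (by omega)) h

lemma hsigma : sigma Lser * (w^2 - 2*w - 1) = (w + 1) * (w^2 + 2*w - 1) := by
  have h1 : sigma (Lser * (X^2 - 2*X - 1)) = sigma ((X + 1) * (X^2 + 2*X - 1)) := by
    rw [hdagger]
  have e1 : (X^2 - 2*X - 1 : PowerSeries ℚ) = X*X + (-(X + X) + -1) := by ring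
  have e2 : (X^2 + 2*X - 1 : PowerSeries ℚ) = X*X + (X + X + -1) := by ring
  rw [e1, e2] at h1
  simp only [sigma_mul, sigma_add, sigma_neg, sigma_one, sigma_X] at h1
  calc sigma Lser * (w^2 - 2*w - 1) = sigma Lser * (w*w + (-(w+w) + -1)) := by ring
    _ = (w + 1) * (w*w + (w + w + -1)) := h1
    _ = (w + 1) * (w^2 + 2*w - 1) := by ring

lemma hwp1_ne : (w + 1 : PowerSeries ℚ) ≠ 0 := by
  intro h
  have := congrArg (constantCoeff) h
  rw [map_add, hw0, map_one, map_zero] at this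
  simp at this

lemma hsigma2 : -(1+X) * sigma Lser = (3-X)*w - (1+X) := by
  apply mul_right_cancel₀ hwp1_ne
  linear_combination hsigma + (w + 1 - sigma Lser) * R1

noncomputable def Row (i : ℕ) : PowerSeries ℚ := PowerSeries.mk fun j => (tarr i j : ℚ)

lemma row1 : Row 1 = Gps := by
  ext j
  rcases j with _|_|j
  · simp [Row, Gps, tarr, gseq]
  · simp [Row, Gps, tarr, gseq]
  · simp [Row, Gps, tarr]

lemma rowrec (i : ℕ) : Row (i+2) * (1 - X) = Row (i+1) * (1 + X) := by
  ext j
  rw [mul_comm (Row (i+2)), mul_comm (Row (i+1)), sub_mul, add_mul, one_mul, one_mul,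
    map_sub, map_add]
  rcases j with _|_|j
  · simp [Row, tarr]
  · rw [coeff_succ_X_mul, coeff_succ_X_mul]
    simp [Row, tarr]
  · rw [coeff_succ_X_mul, coeff_succ_X_mul]
    simp only [Row, coeff_mk]
    have : tarr (i+2) (j+2) = tarr (i+1) (j+1) + tarr (i+1) (j+2) + tarr (i+2) (j+1) := by
      rw [tarr]
    rw [this]
    push_cast
    ring

abbrev LF := LaurentSeries ℚ

noncomputable def ofPS : PowerSeries ℚ →+* LF := HahnSeries.ofPowerSeries ℤ ℚ

noncomputable def yinv : LF := HahnSeries.single (-1 : ℤ) 1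

lemma lyX : ofPS X * yinv = 1 := by
  rw [ofPS, HahnSeries.ofPowerSeries_X, yinv, HahnSeries.single_mul_single]
  norm_num [HahnSeries.single_zero_one]

lemma labsorb (p : PowerSeries ℚ) : ofPS (X * p) * yinv = ofPS p := by
  rw [map_mul, mul_comm (ofPS X), mul_assoc, lyX, mul_one]

lemma lyinvpow (k : ℕ) : yinv ^ k = HahnSeries.single (-(k:ℤ)) 1 := by
  induction k with
  | zero => simp [HahnSeries.single_zero_one]
  | succ k ih =>
    rw [pow_succ, ih, yinv, HahnSeries.single_mul_single, mul_one]
    congr 1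
    push_cast
    ring

lemma lct (p : PowerSeries ℚ) (k : ℕ) : (ofPS p * yinv^k).coeff 0 = coeff k p := by
  rw [mul_comm, lyinvpow]
  have h := HahnSeries.coeff_single_mul_add (r := (1:ℚ)) (x := ofPS p) (a := (k:ℤ)) (b := -(k:ℤ))
  rw [add_neg_cancel] at h
  rw [h, one_mul, ofPS]
  exact HahnSeries.ofPowerSeries_apply_coeff _ _

noncomputable def cF : ℚ →+* LF := ofPS.comp (C : ℚ →+* PowerSeries ℚ)

lemma cF_coeff0 (r : ℚ) (x : LF) : (cF r * x).coeff 0 = r * x.coeff 0 := by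
  have : cF r = HahnSeries.single (0:ℤ) r := by
    rw [cF, RingHom.comp_apply, ofPS, HahnSeries.ofPowerSeries_C]
    rfl
  rw [this, HahnSeries.coeff_single_zero_mul]

noncomputable def mR : PowerSeries ℚ →+* PowerSeries LF := PowerSeries.map cF

noncomputable def Psi : PowerSeries LF :=
  PowerSeries.mk fun n => ofPS (Row (n+1)) * yinv^(n+1)

lemma hXyk (k : ℕ) : ofPS X * yinv^(k+1) = yinv^k := by
  rw [pow_succ', ← mul_assoc, lyX, one_mul]

lemma hQpPsi : (C (ofPS (X*(1-X))) - X * (C (ofPS (1+X)))) * Psi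
    = C (ofPS ((1-X)*Gps)) := by
  refine PowerSeries.ext fun n => ?_
  rw [sub_mul, map_sub, coeff_C_mul, mul_assoc]
  rcases n with _|n
  · have h2 : (coeff 0) (X * (C (ofPS (1+X)) * Psi)) = 0 := by
      simp [PowerSeries.coeff_zero_eq_constantCoeff, map_mul]
    rw [h2, sub_zero, PowerSeries.coeff_zero_C]
    simp only [Psi, coeff_mk, zero_add]
    rw [row1, pow_one, ← mul_assoc, ← map_mul,
      show (X*(1-X))*Gps = X * ((1-X)*Gps) by ring, labsorb]
  · rw [coeff_succ_X_mul, coeff_C_mul, PowerSeries.coeff_C, if_neg (Nat.succ_ne_zero n)]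
    simp only [Psi, coeff_mk]
    rw [show n+1+1 = n+2 from rfl]
    have key : (1-X) * Row (n+2) = (1+X) * Row (n+1) := by
      rw [mul_comm, rowrec, mul_comm]
    calc ofPS (X*(1-X)) * (ofPS (Row (n+2)) * yinv^(n+2))
          - ofPS (1+X) * (ofPS (Row (n+1)) * yinv^(n+1))
        = (ofPS (X * ((1-X) * Row (n+2))) * yinv) * yinv^(n+1)
          - ofPS ((1+X) * Row (n+1)) * yinv^(n+1) := by
          simp only [map_mul, pow_succ']
          ring
      _ = ofPS ((1-X) * Row (n+2)) * yinv^(n+1)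
          - ofPS ((1+X) * Row (n+1)) * yinv^(n+1) := by rw [labsorb]
      _ = 0 := by rw [key, sub_self]

noncomputable def Pser : PowerSeries LF :=
  PowerSeries.mk fun n => ∑ k ∈ Finset.range (n+1), cF (coeff n (w^k)) * yinv^(k+1)

lemma E2 : (C (ofPS X) - mR w) * Pser = 1 := by
  refine PowerSeries.ext fun n => ?_
  rw [sub_mul, map_sub, coeff_C_mul]
  have hA : ofPS X * (coeff n) Pser
      = ∑ k ∈ Finset.range (n+1), cF (coeff n (w^k)) * yinv^k := by
    rw [Pser, coeff_mk, Finset.mul_sum]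
    apply Finset.sum_congr rfl
    intro k _
    rw [mul_left_comm, hXyk]
  have hB : (coeff n) (mR w * Pser)
      = ∑ k ∈ Finset.range (n+1), cF (coeff n (w^(k+1))) * yinv^(k+1) := by
    rw [PowerSeries.coeff_mul]
    have step1 : ∀ p ∈ Finset.HasAntidiagonal.antidiagonal n,
        (coeff p.1) (mR w) * (coeff p.2) Pser
          = ∑ k ∈ Finset.range (n+1),
              cF (coeff p.1 w * coeff p.2 (w^k)) * yinv^(k+1) := by
      rintro ⟨i, j⟩ hij
      rw [Finset.HasAntidiagonal.mem_antidiagonal] at hij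
      rw [mR, PowerSeries.coeff_map, Pser, coeff_mk, Finset.mul_sum]
      rw [Finset.sum_subset (Finset.range_subset_range.mpr (by omega : j + 1 ≤ n + 1))]
      · apply Finset.sum_congr rfl
        intro k _
        rw [← mul_assoc, ← map_mul]
      · intro k _ hk
        rw [coeff_w_pow_lt (by simpa using hk), map_zero, zero_mul, mul_zero]
    rw [Finset.sum_congr rfl step1, Finset.sum_comm]
    apply Finset.sum_congr rfl
    intro k _
    rw [← Finset.sum_mul, ← map_sum, ← PowerSeries.coeff_mul, ← pow_succ']
  rw [hA, hB, Finset.sum_range_succ' (fun k => cF (coeff n (w^k)) * yinv^k) n,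
    Finset.sum_range_succ]
  rw [coeff_w_pow_lt (Nat.lt_succ_self n), map_zero, zero_mul, add_zero,
    add_sub_cancel_left]
  simp [PowerSeries.coeff_one, apply_ite cF]

noncomputable def vbar : PowerSeries ℚ := PowerSeries.invOfUnit (1 - X - w) 1

lemma hv : (1 - X - w) * vbar = 1 := by
  apply PowerSeries.mul_invOfUnit
  simp [hw0]

noncomputable def qse (n : ℕ) : PowerSeries ℚ := PowerSeries.mk fun k => coeff n (vbar^(k+1))

noncomputable def Pbar : PowerSeries LF := PowerSeries.mk fun n => -(ofPS (qse n))

lemma E3 : (C (ofPS X) - mR (1 - X - w)) * Pbar = 1 := by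
  refine PowerSeries.ext fun n => ?_
  rw [sub_mul, map_sub, coeff_C_mul]
  have hA : ofPS X * (coeff n) Pbar = -(ofPS (X * qse n)) := by
    simp only [Pbar, coeff_mk, map_mul]
    ring
  have hB : (coeff n) (mR (1 - X - w) * Pbar)
      = -(ofPS (∑ p ∈ Finset.HasAntidiagonal.antidiagonal n, C (coeff p.1 (1 - X - w)) * qse p.2)) := by
    rw [PowerSeries.coeff_mul, map_sum, ← Finset.sum_neg_distrib]
    apply Finset.sum_congr rfl
    rintro ⟨i, j⟩ _
    simp only [mR, PowerSeries.coeff_map, Pbar, coeff_mk, map_mul, cF,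
      RingHom.comp_apply]
    ring
  have key : ∑ p ∈ Finset.HasAntidiagonal.antidiagonal n, C (coeff p.1 (1 - X - w)) * qse p.2 - X * qse n
      = C (coeff n (1 : PowerSeries ℚ)) := by
    ext k
    rw [map_sub, map_sum]
    have h1 : ∀ p ∈ Finset.HasAntidiagonal.antidiagonal n, (coeff k) (C (coeff p.1 (1 - X - w)) * qse p.2)
        = coeff p.1 (1 - X - w) * coeff p.2 (vbar^(k+1)) := by
      rintro ⟨i, j⟩ _
      rw [coeff_C_mul, qse, coeff_mk]
    rw [Finset.sum_congr rfl h1, ← PowerSeries.coeff_mul]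
    rcases k with _|k
    · rw [pow_one, hv]
      simp [qse, PowerSeries.coeff_zero_eq_constantCoeff, map_mul, PowerSeries.coeff_C]
    · rw [coeff_succ_X_mul, qse, coeff_mk, PowerSeries.coeff_C, if_neg (Nat.succ_ne_zero k)]
      have : (1 - X - w) * vbar^(k+2) = vbar^(k+1) := by
        rw [show ((k:ℕ)+2) = (k+1)+1 by ring, pow_succ', ← mul_assoc, hv, one_mul]
      rw [this, sub_self]
  rw [hA, hB]
  have e : -(ofPS (X * qse n)) -
      -(ofPS (∑ p ∈ Finset.HasAntidiagonal.antidiagonal n, C (coeff p.1 (1 - X - w)) * qse p.2))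
      = ofPS ((∑ p ∈ Finset.HasAntidiagonal.antidiagonal n, C (coeff p.1 (1 - X - w)) * qse p.2)
          - X * qse n) := by
    rw [map_sub]
    ring
  rw [e, key]
  rcases n with _|n
  · simp
  · rw [PowerSeries.coeff_one, if_neg (Nat.succ_ne_zero n), map_zero, map_zero,
      PowerSeries.coeff_one, if_neg (Nat.succ_ne_zero n)]

lemma hab_sum : mR w + mR (1 - X - w) = 1 - X := by
  rw [← map_add, show w + (1 - X - w) = 1 - X by ring, map_sub, map_one, mR, PowerSeries.map_X]

lemma hab_prod : mR w * mR (1 - X - w) = X := by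
  rw [← map_mul, show w * (1 - X - w) = X by linear_combination -R1, mR, PowerSeries.map_X]

lemma hfact : C (ofPS (X*(1-X))) - X * C (ofPS (1+X))
    = -((C (ofPS X) - mR w) * (C (ofPS X) - mR (1 - X - w))) := by
  have e1 : C (ofPS (X*(1-X))) = C (ofPS X) * (1 - C (ofPS X)) := by
    rw [map_mul, map_mul, map_sub, map_one, map_sub, map_one]
  have e2 : C (ofPS (1+X)) = 1 + C (ofPS X) := by
    rw [map_add, map_add, map_one, map_one]
  rw [e1, e2]
  linear_combination (-(C (ofPS X))) * hab_sum + hab_prod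

lemma E1 : (C (ofPS X) - mR w) * (C (ofPS X) - mR (1 - X - w)) * Psi
    = -(C (ofPS ((1-X)*Gps))) := by
  have h := hQpPsi
  rw [hfact] at h
  linear_combination -h

lemma E4 : (mR w - mR (1 - X - w)) * Psi
    = -(C (ofPS ((1-X)*Gps)) * (Pser - Pbar)) := by
  linear_combination (Pser - Pbar) * E1
    + (-((C (ofPS X) - mR (1 - X - w)) * Psi)) * E2
    + ((C (ofPS X) - mR w) * Psi) * E3

noncomputable def ctMap (r : PowerSeries LF) : PowerSeries ℚ :=
  PowerSeries.mk fun n => ((coeff n) r).coeff 0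

lemma ct_sum {α : Type} (s : Finset α) (f : α → LF) :
    (∑ p ∈ s, f p).coeff (0:ℤ) = ∑ p ∈ s, (f p).coeff (0:ℤ) :=
  map_sum (HahnSeries.coeff.addMonoidHom (0:ℤ)) f s

lemma ctPsi : ctMap Psi = PowerSeries.mk (fun n => (tarr (n + 1) (n + 1) : ℚ)) := by
  ext n
  rw [ctMap, coeff_mk, coeff_mk, Psi, coeff_mk, lct, Row, coeff_mk]

lemma ct_m_mul (p : PowerSeries ℚ) (r : PowerSeries LF) :
    ctMap (mR p * r) = p * ctMap r := by
  ext n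
  rw [ctMap, coeff_mk, PowerSeries.coeff_mul, ct_sum, PowerSeries.coeff_mul]
  apply Finset.sum_congr rfl
  rintro ⟨i, j⟩ _
  rw [mR, PowerSeries.coeff_map, cF_coeff0, ctMap, coeff_mk]

lemma ct_KP : ctMap (C (ofPS ((1-X)*Gps)) * Pser) = sigma Lser := by
  ext n
  rw [ctMap, coeff_mk, coeff_C_mul, Pser, coeff_mk, Finset.mul_sum,
    ct_sum, sigma, coeff_mk]
  apply Finset.sum_congr rfl
  intro k _
  show (ofPS ((1-X)*Gps) * (cF (coeff n (w^k)) * yinv^(k+1))).coeff (0:ℤ) = _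
  rw [mul_left_comm, cF_coeff0, lct, ← hL, coeff_succ_X_mul, mul_comm]

lemma ct_KPbar : ctMap (C (ofPS ((1-X)*Gps)) * Pbar) = 0 := by
  refine PowerSeries.ext fun n => ?_
  simp only [ctMap, coeff_mk, coeff_C_mul, Pbar]
  have e : ofPS ((1-X)*Gps) * -(ofPS (qse n)) = -(ofPS ((1-X)*Gps * qse n)) := by
    rw [← map_neg, ← map_mul, ← map_neg, mul_neg]
  have h0 : (ofPS ((1-X)*Gps * qse n)).coeff (0:ℤ)
      = coeff 0 ((1-X)*Gps * qse n) := by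
    have := lct ((1-X)*Gps * qse n) 0
    rwa [pow_zero, mul_one] at this
  rw [e, HahnSeries.coeff_neg, h0, ← hL, PowerSeries.coeff_zero_eq_constantCoeff]
  simp [map_mul]

lemma ct_sub (x y : PowerSeries LF) : ctMap (x - y) = ctMap x - ctMap y := by
  ext n
  rw [ctMap, coeff_mk, map_sub, HahnSeries.coeff_sub, map_sub, ctMap, ctMap, coeff_mk, coeff_mk]

lemma ct_neg (x : PowerSeries LF) : ctMap (-x) = -ctMap x := by
  ext n
  rw [ctMap, coeff_mk, map_neg, HahnSeries.coeff_neg, map_neg, ctMap, coeff_mk]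

lemma hmain : (2*w - 1 + X) * (PowerSeries.mk (fun n => (tarr (n + 1) (n + 1) : ℚ)))
    = -(sigma Lser) := by
  have e : mR w - mR (1 - X - w) = mR (2*w - 1 + X) := by
    rw [← map_sub, show w - (1 - X - w) = 2*w - 1 + X by ring]
  have h := E4
  rw [e, mul_sub (C (ofPS ((1-X)*Gps)))] at h
  have h2 := congrArg ctMap h
  rw [ct_m_mul, ctPsi, ct_neg, ct_sub, ct_KP, ct_KPbar, sub_zero] at h2
  exact h2

lemma main : (1 + X)^2 * (PowerSeries.mk (fun n => (tarr (n + 1) (n + 1) : ℚ)))^2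
    - (1 + X) * (3 - X) * (PowerSeries.mk (fun n => (tarr (n + 1) (n + 1) : ℚ))) + 2 = 0 := by
  set A := PowerSeries.mk (fun n => (tarr (n + 1) (n + 1) : ℚ)) with hAdef
  have hstar : ((1+X)*A) * (2*w - 1 + X) = (3-X)*w - (1+X) := by
    calc ((1+X)*A) * (2*w - 1 + X) = (1+X) * ((2*w - 1 + X) * A) := by ring
      _ = (1+X) * (-(sigma Lser)) := by rw [hmain]
      _ = -(1+X) * sigma Lser := by ring
      _ = (3-X)*w - (1+X) := hsigma2
  have hu : (2*w - 1 + X : PowerSeries ℚ) ≠ 0 := by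
    intro h
    have h2 := congrArg (constantCoeff) h
    simp [hw0] at h2
  have h0 : ((1 + X)^2 * A^2 - (1 + X) * (3 - X) * A + 2) * (2*w - 1 + X)^2 = 0 := by
    linear_combination (((1+X)*A)*(2*w - 1 + X) + ((3-X)*w - (1+X))
      - (3-X)*(2*w - 1 + X)) * hstar + (8 - (3-X)^2) * R1
  rcases mul_eq_zero.mp h0 with h | h
  · exact h
  · exact absurd h (pow_ne_zero 2 hu)


end DiagGF

/-- The generating function `A(z) = Σ_{n≥1} t(n,n) z^(n-1)` of the diagonal
entries satisfies `(1+z)² A(z)² − (1+z)(3−z) A(z) + 2 = 0`. -/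
theorem diag_generating_function_quadratic :
    letI A : PowerSeries ℚ := PowerSeries.mk (fun n => (tarr (n + 1) (n + 1) : ℚ))
    (1 + X) ^ 2 * A ^ 2 - (1 + X) * (3 - X) * A + 2 = 0 := by
  exact DiagGF.main
end

section
/- Define f : ℕ≥1 → ℕ by f(1) = 2, f(2) = 4, and f(n) = 2·f(n-1) + f(n-2) for n > 2. Then for every n ≥ 1, f(n) = 2·Σ_{j=1}^{n} d(n-j, j-1), where d is the Delannoy array; that is, f(n) is twice the n-th anti-diagonal sum of the Delannoy numbers. -/
/-- Twice the Pell numbers: `f 1 = 2`, `f 2 = 4`, `f n = 2·f (n-1) + f (n-2)`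
for `n > 2`. (`f 0` is a junk value.) -/
def fseq : ℕ → ℕ
  | 0 => 0
  | 1 => 2
  | 2 => 4
  | n + 3 => 2 * fseq (n + 2) + fseq (n + 1)

def gsum (n : ℕ) : ℕ := ∑ i ∈ Finset.range n, delannoy (n - 1 - i) i

lemma gsum_rec (n : ℕ) : gsum (n + 2) = 2 * gsum (n + 1) + gsum n := by
  have h2 : gsum (n + 2)
      = (∑ k ∈ Finset.range n, delannoy (n - k) (k + 1)) + 2 := by
    unfold gsum
    rw [Finset.sum_range_succ, Finset.sum_range_succ']
    have e1 : ∀ k ∈ Finset.range n,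
        delannoy (n + 2 - 1 - (k + 1)) (k + 1) = delannoy (n - k) (k + 1) := by
      intro k hk
      congr 1
      omega
    rw [Finset.sum_congr rfl e1]
    have : n + 2 - 1 - (n + 1) = 0 := by omega
    rw [this]
    simp [delannoy_zero_left, delannoy_zero_right]
  have h3 : ∀ k ∈ Finset.range n,
      delannoy (n - k) (k + 1)
        = delannoy (n - 1 - k) (k + 1) + delannoy (n - k) k + delannoy (n - 1 - k) k := by
    intro k hk
    simp only [Finset.mem_range] at hk
    have : n - k = (n - 1 - k) + 1 := by omega
    rw [this, delannoy]
  rw [Finset.sum_congr rfl h3] at h2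
  rw [Finset.sum_add_distrib, Finset.sum_add_distrib] at h2
  have hA : gsum (n + 1) = (∑ k ∈ Finset.range n, delannoy (n - 1 - k) (k + 1)) + 1 := by
    unfold gsum
    rw [Finset.sum_range_succ']
    have e : ∀ k ∈ Finset.range n,
        delannoy (n + 1 - 1 - (k + 1)) (k + 1) = delannoy (n - 1 - k) (k + 1) := by
      intro k hk; congr 1; omega
    rw [Finset.sum_congr rfl e]
    simp [delannoy_zero_right]
  have hB : gsum (n + 1) = (∑ k ∈ Finset.range n, delannoy (n - k) k) + 1 := by
    unfold gsum
    rw [Finset.sum_range_succ]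
    have e : ∀ k ∈ Finset.range n,
        delannoy (n + 1 - 1 - k) k = delannoy (n - k) k := by
      intro k hk; congr 1
    rw [Finset.sum_congr rfl e]
    simp [delannoy_zero_left]
  have hC : gsum n = ∑ k ∈ Finset.range n, delannoy (n - 1 - k) k := rfl
  omega

lemma fseq_eq (n : ℕ) : fseq (n + 1) = 2 * gsum (n + 1) := by
  induction n using Nat.twoStepInduction with
  | zero => simp [fseq, gsum, Finset.sum_range_succ, delannoy]
  | one => simp [fseq, gsum, Finset.sum_range_succ, delannoy]
  | more n ih1 ih2 =>
    show fseq (n + 3) = 2 * gsum (n + 3)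
    rw [fseq, gsum_rec, ih1, ih2]
    ring

/-- For `n ≥ 1`, `f(n)` is twice the `n`-th anti-diagonal sum of the Delannoy
numbers: `f(n) = 2·Σ_{j=1}^{n} d(n-j, j-1)`. -/
theorem fseq_eq_twice_antidiagonal_sum (n : ℕ) (hn : 1 ≤ n) :
    fseq n = 2 * ∑ j ∈ Finset.Icc 1 n, delannoy (n - j) (j - 1) := by
  obtain ⟨m, rfl⟩ := Nat.exists_eq_add_of_le hn
  rw [add_comm] at *
  rw [fseq_eq]
  congr 1
  unfold gsum
  rw [← Finset.Ico_add_one_right_eq_Icc, Finset.sum_Ico_eq_sum_range]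
  have : m + 1 + 1 - 1 = m + 1 := by omega
  rw [this]
  apply Finset.sum_congr rfl
  intro i hi
  congr 1 <;> omega
end
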